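/- Let λ, φ be real numbers with 0 < λ < φ < π/2, and set x = cos²((φ+λ)/2), y = sin²((φ−λ)/2). Then: (i) h := √(xy/((1−x)(1−y))) = (sin φ − sin λ)/(sin φ + sin λ); and (ii) the third derivative of η ↦ χ(x,y;η) at η = h equals ∂³_η χ(x,y;η)|_{η=h} = −(sin φ − sin λ)(sin φ + sin λ)⁷ / (8 sin λ · cos⁴λ · sin³φ), where χ(x,y;η) := −xy·log η + ((1−x−y)²/2)·log(1−η) + (1/2)·log(1+η) − (1−x)y·log(y+(1−x)η) − x(1−y)·log(x+(1−y)η) + x(1−x)·log(x+(1−x)η) + y(1−y)·log(y+(1−y)η) + ((x−y)²/2)·log(x+y+(2−x−y)η). -/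

import Mathlib

/-- The η-dependent part of the Regime II free energy. -/
noncomputable def chi (x y η : ℝ) : ℝ :=
  -(x * y) * Real.log η
    + (1 - x - y) ^ 2 / 2 * Real.log (1 - η)
    + 1 / 2 * Real.log (1 + η)
    - (1 - x) * y * Real.log (y + (1 - x) * η)
    - x * (1 - y) * Real.log (x + (1 - y) * η)
    + x * (1 - x) * Real.log (x + (1 - x) * η)
    + y * (1 - y) * Real.log (y + (1 - y) * η)
    + (x - y) ^ 2 / 2 * Real.log (x + y + (2 - x - y) * η)


noncomputable def chi1' (x y t : ℝ) : ℝ :=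
  (-(x*y))/(0+1*t) + (-((1-x-y)^2/2))/(1+(-1)*t) + (1/2)/(1+1*t)
    + (-((1-x)^2*y))/(y+(1-x)*t) + (-(x*(1-y)^2))/(x+(1-y)*t)
    + (x*(1-x)^2)/(x+(1-x)*t) + (y*(1-y)^2)/(y+(1-y)*t)
    + ((x-y)^2/2*(2-x-y))/(x+y+(2-x-y)*t)

noncomputable def chi2' (x y t : ℝ) : ℝ :=
  (x*y)/(0+1*t)^2 + (-((1-x-y)^2/2))/(1+(-1)*t)^2 + (-(1/2))/(1+1*t)^2
    + ((1-x)^3*y)/(y+(1-x)*t)^2 + (x*(1-y)^3)/(x+(1-y)*t)^2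
    + (-(x*(1-x)^3))/(x+(1-x)*t)^2 + (-(y*(1-y)^3))/(y+(1-y)*t)^2
    + (-((x-y)^2/2*(2-x-y)^2))/(x+y+(2-x-y)*t)^2

noncomputable def chi3' (x y t : ℝ) : ℝ :=
  (-2*(x*y))/(0+1*t)^3 + (-((1-x-y)^2))/(1+(-1)*t)^3 + 1/(1+1*t)^3
    + (-2*((1-x)^4*y))/(y+(1-x)*t)^3 + (-2*(x*(1-y)^4))/(x+(1-y)*t)^3
    + (2*(x*(1-x)^4))/(x+(1-x)*t)^3 + (2*(y*(1-y)^4))/(y+(1-y)*t)^3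
    + ((x-y)^2*(2-x-y)^3)/(x+y+(2-x-y)*t)^3

lemma hlin (q r η : ℝ) : HasDerivAt (fun t => q + r*t) r η := by
  simpa using ((hasDerivAt_id η).const_mul r).const_add q

lemma pl (p q r η : ℝ) (hq : q + r*η ≠ 0) :
    HasDerivAt (fun t => p * Real.log (q+r*t)) (p*(r/(q+r*η))) η :=
  ((hlin q r η).log hq).const_mul p

lemma pd1 (p q r η : ℝ) (hq : q + r*η ≠ 0) :
    HasDerivAt (fun t => p/(q+r*t)) (-(p*r)/(q+r*η)^2) η := by
  have h := (hasDerivAt_const η p).div (hlin q r η) hq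
  refine h.congr_deriv ?_
  ring

lemma pd2 (p q r η : ℝ) (hq : q + r*η ≠ 0) :
    HasDerivAt (fun t => p/(q+r*t)^2) (-(2*p*r)/(q+r*η)^3) η := by
  have hpow : HasDerivAt (fun t => (q+r*t)^2) (2*(q+r*η)*r) η := by
    exact ((hlin q r η).pow 2).congr_deriv (by norm_num)
  have h := (hasDerivAt_const η p).div hpow (pow_ne_zero 2 hq)
  refine h.congr_deriv ?_
  field_simp
  ring

lemma third_deriv (x y h : ℝ) (hx0 : 0 < x) (hx1 : x < 1) (hy0 : 0 < y) (hy1 : y < 1)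
    (hh : h ∈ Set.Ioo (0:ℝ) 1) :
    deriv (deriv (deriv (fun η => chi x y η))) h = chi3' x y h := by
  have key : ∀ η ∈ Set.Ioo (0:ℝ) 1,
      HasDerivAt (fun t => chi x y t) (chi1' x y η) η ∧
      HasDerivAt (fun t => chi1' x y t) (chi2' x y η) η ∧
      HasDerivAt (fun t => chi2' x y t) (chi3' x y η) η := by
    rintro η ⟨hη0, hη1⟩
    have n1 : (0:ℝ) + 1*η ≠ 0 := by simpa using hη0.ne'
    have n2 : (1:ℝ) + (-1)*η ≠ 0 := by nlinarith
    have n3 : (1:ℝ) + 1*η ≠ 0 := by nlinarith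
    have n4 : y + (1-x)*η ≠ 0 := by nlinarith
    have n5 : x + (1-y)*η ≠ 0 := by nlinarith
    have n6 : x + (1-x)*η ≠ 0 := by nlinarith
    have n7 : y + (1-y)*η ≠ 0 := by nlinarith
    have n8 : x + y + (2-x-y)*η ≠ 0 := by nlinarith
    refine ⟨?_, ?_, ?_⟩
    · have H1 : HasDerivAt (fun t : ℝ => -(x*y) * Real.log t) (-(x*y) * η⁻¹) η :=
        (Real.hasDerivAt_log hη0.ne').const_mul _
      have H2 : HasDerivAt (fun t : ℝ => (1-x-y)^2/2 * Real.log (1-t))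
          ((1-x-y)^2/2 * (-1/(1-η))) η := by
        have hl : HasDerivAt (fun t : ℝ => 1 - t) (-1) η := by
          simpa using (hasDerivAt_id η).const_sub 1
        have : (1:ℝ) - η ≠ 0 := by nlinarith
        exact (hl.log this).const_mul _
      have H3 : HasDerivAt (fun t : ℝ => 1/2 * Real.log (1+t)) (1/2 * (1/(1+η))) η := by
        have hl : HasDerivAt (fun t : ℝ => 1 + t) 1 η := by
          simpa using (hasDerivAt_id η).const_add 1
        have : (1:ℝ) + η ≠ 0 := by nlinarith
        exact (hl.log this).const_mul _
      have H4 := pl ((1-x)*y) y (1-x) η n4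
      have H5 := pl (x*(1-y)) x (1-y) η n5
      have H6 := pl (x*(1-x)) x (1-x) η n6
      have H7 := pl (y*(1-y)) y (1-y) η n7
      have H8 := pl ((x-y)^2/2) (x+y) (2-x-y) η n8
      have H := ((((((H1.add H2).add H3).sub H4).sub H5).add H6).add H7).add H8
      have hfun : (fun t => chi x y t) = (fun t =>
          -(x * y) * Real.log t + (1 - x - y) ^ 2 / 2 * Real.log (1 - t)
          + 1 / 2 * Real.log (1 + t) - (1 - x) * y * Real.log (y + (1 - x) * t)
          - x * (1 - y) * Real.log (x + (1 - y) * t) + x * (1 - x) * Real.log (x + (1 - x) * t)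
          + y * (1 - y) * Real.log (y + (1 - y) * t)
          + (x - y) ^ 2 / 2 * Real.log (x + y + (2 - x - y) * t)) := by
        funext t; simp only [chi]
      rw [hfun]
      refine H.congr_deriv ?_
      simp only [chi1']
      ring
    · have H1 := pd1 (-(x*y)) 0 1 η n1
      have H2 := pd1 (-((1-x-y)^2/2)) 1 (-1) η n2
      have H3 := pd1 (1/2) 1 1 η n3
      have H4 := pd1 (-((1-x)^2*y)) y (1-x) η n4
      have H5 := pd1 (-(x*(1-y)^2)) x (1-y) η n5
      have H6 := pd1 (x*(1-x)^2) x (1-x) η n6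
      have H7 := pd1 (y*(1-y)^2) y (1-y) η n7
      have H8 := pd1 ((x-y)^2/2*(2-x-y)) (x+y) (2-x-y) η n8
      have H := ((((((H1.add H2).add H3).add H4).add H5).add H6).add H7).add H8
      have hfun : (fun t => chi1' x y t) = (fun t =>
          (-(x*y))/(0+1*t) + (-((1-x-y)^2/2))/(1+(-1)*t) + (1/2)/(1+1*t)
          + (-((1-x)^2*y))/(y+(1-x)*t) + (-(x*(1-y)^2))/(x+(1-y)*t)
          + (x*(1-x)^2)/(x+(1-x)*t) + (y*(1-y)^2)/(y+(1-y)*t)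
          + ((x-y)^2/2*(2-x-y))/(x+y+(2-x-y)*t)) := by
        funext t; simp only [chi1']
      rw [hfun]
      refine H.congr_deriv ?_
      simp only [chi2']
      ring
    · have H1 := pd2 (x*y) 0 1 η n1
      have H2 := pd2 (-((1-x-y)^2/2)) 1 (-1) η n2
      have H3 := pd2 (-(1/2)) 1 1 η n3
      have H4 := pd2 ((1-x)^3*y) y (1-x) η n4
      have H5 := pd2 (x*(1-y)^3) x (1-y) η n5
      have H6 := pd2 (-(x*(1-x)^3)) x (1-x) η n6
      have H7 := pd2 (-(y*(1-y)^3)) y (1-y) η n7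
      have H8 := pd2 (-((x-y)^2/2*(2-x-y)^2)) (x+y) (2-x-y) η n8
      have H := ((((((H1.add H2).add H3).add H4).add H5).add H6).add H7).add H8
      have hfun : (fun t => chi2' x y t) = (fun t =>
          (x*y)/(0+1*t)^2 + (-((1-x-y)^2/2))/(1+(-1)*t)^2 + (-(1/2))/(1+1*t)^2
          + ((1-x)^3*y)/(y+(1-x)*t)^2 + (x*(1-y)^3)/(x+(1-y)*t)^2
          + (-(x*(1-x)^3))/(x+(1-x)*t)^2 + (-(y*(1-y)^3))/(y+(1-y)*t)^2
          + (-((x-y)^2/2*(2-x-y)^2))/(x+y+(2-x-y)*t)^2) := by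
        funext t; simp only [chi2']
      rw [hfun]
      refine H.congr_deriv ?_
      simp only [chi3']
      ring
  have E1 : Set.EqOn (deriv (fun t => chi x y t)) (chi1' x y) (Set.Ioo 0 1) :=
    fun η hη => ((key η hη).1).deriv
  have E2 : Set.EqOn (deriv (deriv (fun t => chi x y t))) (chi2' x y) (Set.Ioo 0 1) := by
    intro η hη
    have hev : deriv (fun t => chi x y t) =ᶠ[nhds η] chi1' x y :=
      Filter.eventuallyEq_of_mem (isOpen_Ioo.mem_nhds hη) E1
    rw [hev.deriv_eq]
    exact ((key η hη).2.1).deriv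
  have hev : deriv (deriv (fun t => chi x y t)) =ᶠ[nhds h] chi2' x y :=
    Filter.eventuallyEq_of_mem (isOpen_Ioo.mem_nhds hh) E2
  rw [hev.deriv_eq]
  exact ((key h hh).2.2).deriv

set_option maxHeartbeats 4000000 in
set_option maxRecDepth 100000 in
lemma chi3'_key (a b c d : ℝ) (ha : 0 < a) (hb : 0 < b) (hc : 0 < c) (hd : 0 < d)
    (hab : a^2+b^2 = 1) (hcd : c^2+d^2 = 1) (hT : a*d < b*c) :
    chi3' (a^2) (d^2) (a*d/(b*c)) =
      -(2*(a*d)*(2*(b*c))^7)/(8*(b*c-a*d)*(a*c+b*d)^4*(b*c+a*d)^3) := by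
  have hb2 : (1:ℝ) - a^2 = b^2 := by linarith
  have hc2 : (1:ℝ) - d^2 = c^2 := by linarith
  have hM : a*b+c*d = (b*c+a*d)*(a*c+b*d) := by
    linear_combination (-(c*d))*hab + (-(a*b))*hcd
  have hST : b^2-d^2 = (b*c+a*d)*(b*c-a*d) := by
    linear_combination (d^2)*hab + (-(b^2))*hcd
  have hCC : a^2-d^2 = (a*c+b*d)*(a*c-b*d) := by
    linear_combination (d^2)*hab + (-(a^2))*hcd
  have h2ad : 2-a^2-d^2 = 1+(b*c+a*d)*(b*c-a*d) := by
    linear_combination (d^2-1)*hab + (-(b^2))*hcd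
  have hbc : (0:ℝ) < b*c := by positivity
  have hTpos : (0:ℝ) < b*c - a*d := by linarith
  have hSpos : (0:ℝ) < b*c + a*d := by positivity
  have hCpos : (0:ℝ) < a*c + b*d := by positivity
  have hh1 : a*d/(b*c) < 1 := (div_lt_one hbc).mpr hT
  have hd4 : d^2+b^2*(a*d/(b*c)) = d*(a*b+c*d)/c := by field_simp; ring
  have hd5 : a^2+c^2*(a*d/(b*c)) = a*(a*b+c*d)/b := by field_simp
  have hd6 : a^2+b^2*(a*d/(b*c)) = a*(a*c+b*d)/c := by field_simp
  have hd7 : d^2+c^2*(a*d/(b*c)) = d*(a*c+b*d)/b := by field_simp; ring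
  have hd8 : a^2+d^2+(1+(b*c+a*d)*(b*c-a*d))*(a*d/(b*c))
      = (b*c+a*d)*(a*c+b*d)^2/(b*c) := by
    field_simp
    linear_combination (-(b*c*d^2) - a*d^3 - a*c^2*d)*hab + (-(a*d) - a^2*b*c)*hcd
  have hDne : a*d*(b*c-a*d)^3*(b*c+a*d)^6*(a*c+b*d)^7 ≠ 0 := by positivity
  have hden1 : ((0:ℝ)+1*(a*d/(b*c)))^3 ≠ 0 := by positivity
  have hden2 : ((1:ℝ)+(-1)*(a*d/(b*c)))^3 ≠ 0 := by
    have : (0:ℝ) < 1+(-1)*(a*d/(b*c)) := by linarith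
    positivity
  have hden3 : ((1:ℝ)+1*(a*d/(b*c)))^3 ≠ 0 := by positivity
  have hden4 : (d*((b*c+a*d)*(a*c+b*d))/c)^3 ≠ 0 := by positivity
  have hden5 : (a*((b*c+a*d)*(a*c+b*d))/b)^3 ≠ 0 := by positivity
  have hden6 : (a*(a*c+b*d)/c)^3 ≠ 0 := by positivity
  have hden7 : (d*(a*c+b*d)/b)^3 ≠ 0 := by positivity
  have hden8 : ((b*c+a*d)*(a*c+b*d)^2/(b*c))^3 ≠ 0 := by positivity
  have e1 : -2*(a^2*d^2)/(0+1*(a*d/(b*c)))^3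
      = (-2*b^3*c^3*(b*c-a*d)^3*(b*c+a*d)^6*(a*c+b*d)^7)
        /(a*d*(b*c-a*d)^3*(b*c+a*d)^6*(a*c+b*d)^7) := by
    rw [div_eq_div_iff hden1 hDne]; field_simp; ring
  have e2 : -((b*c+a*d)*(b*c-a*d))^2/(1+(-1)*(a*d/(b*c)))^3
      = (-(a*d)*b^3*c^3*(b*c+a*d)^8*(b*c-a*d)^2*(a*c+b*d)^7)
        /(a*d*(b*c-a*d)^3*(b*c+a*d)^6*(a*c+b*d)^7) := by
    rw [div_eq_div_iff hden2 hDne]; field_simp; ring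
  have e3 : 1/(1+1*(a*d/(b*c)))^3
      = ((a*d)*b^3*c^3*(b*c-a*d)^3*(b*c+a*d)^3*(a*c+b*d)^7)
        /(a*d*(b*c-a*d)^3*(b*c+a*d)^6*(a*c+b*d)^7) := by
    rw [div_eq_div_iff hden3 hDne]; field_simp
  have e4 : -2*((b^2)^4*d^2)/(d*((b*c+a*d)*(a*c+b*d))/c)^3
      = (-2*a*b^8*c^3*(b*c-a*d)^3*(b*c+a*d)^3*(a*c+b*d)^4)
        /(a*d*(b*c-a*d)^3*(b*c+a*d)^6*(a*c+b*d)^7) := by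
    rw [div_eq_div_iff hden4 hDne]; field_simp
  have e5 : -2*(a^2*(c^2)^4)/(a*((b*c+a*d)*(a*c+b*d))/b)^3
      = (-2*d*b^3*c^8*(b*c-a*d)^3*(b*c+a*d)^3*(a*c+b*d)^4)
        /(a*d*(b*c-a*d)^3*(b*c+a*d)^6*(a*c+b*d)^7) := by
    rw [div_eq_div_iff hden5 hDne]; field_simp
  have e6 : 2*(a^2*(b^2)^4)/(a*(a*c+b*d)/c)^3
      = (2*d*b^8*c^3*(b*c-a*d)^3*(b*c+a*d)^6*(a*c+b*d)^4)
        /(a*d*(b*c-a*d)^3*(b*c+a*d)^6*(a*c+b*d)^7) := by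
    rw [div_eq_div_iff hden6 hDne]; field_simp
  have e7 : 2*(d^2*(c^2)^4)/(d*(a*c+b*d)/b)^3
      = (2*a*b^3*c^8*(b*c-a*d)^3*(b*c+a*d)^6*(a*c+b*d)^4)
        /(a*d*(b*c-a*d)^3*(b*c+a*d)^6*(a*c+b*d)^7) := by
    rw [div_eq_div_iff hden7 hDne]; field_simp
  have e8 : ((a*c+b*d)*(a*c-b*d))^2*(1+(b*c+a*d)*(b*c-a*d))^3
        /((b*c+a*d)*(a*c+b*d)^2/(b*c))^3
      = ((a*d)*b^3*c^3*(a*c-b*d)^2*(1+(b*c+a*d)*(b*c-a*d))^3*(b*c-a*d)^3*(b*c+a*d)^3*(a*c+b*d)^3)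
        /(a*d*(b*c-a*d)^3*(b*c+a*d)^6*(a*c+b*d)^7) := by
    rw [div_eq_div_iff hden8 hDne]; field_simp
  have hred : -2*(b*c-a*d)*(b*c+a*d)^3*(a*c+b*d)^4
      - (a*d)*(b*c+a*d)^5*(a*c+b*d)^4
      + (a*d)*(b*c-a*d)*(a*c+b*d)^4
      - 2*a*b^5*(b*c-a*d)*(a*c+b*d)
      - 2*c^5*d*(b*c-a*d)*(a*c+b*d)
      + 2*d*b^5*(b*c-a*d)*(b*c+a*d)^3*(a*c+b*d)
      + 2*a*c^5*(b*c-a*d)*(b*c+a*d)^3*(a*c+b*d)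
      + (a*d)*(b*c-a*d)*(a*c-b*d)^2*(1+(b*c+a*d)*(b*c-a*d))^3
      = -32*a^2*b^4*c^4*d^2 := by
    linear_combination (2*c^4*d^2 - 2*c^4*d^4 - 2*c^6*d^2 + 2*b^2*c^4*d^2 - 2*b^2*c^4*d^4 + 2*b^4*c^4*d^2 - 2*b^4*c^4*d^4 + 2*b^6*c^4*d^2 - 2*b^6*c^4*d^4 + 2*b^8*c^4*d^2 - 2*a*b*c*d + a*b*c*d^3 + a*b*c*d^5 + 7*a*b*c^3*d^3 - 4*a*b*c^3*d^5 + 2*a*b*c^5*d - 5*a*b*c^5*d^3 - a*b*c^5*d^5 + a*b*c^7*d^3 + 2*a*b*c^9*d - 2*a*b^3*c*d + a*b^3*c*d^5 + 7*a*b^3*c^3*d^3 - 4*a*b^3*c^3*d^5 + 2*a*b^3*c^5*d - 5*a*b^3*c^5*d^3 - a*b^3*c^5*d^5 + a*b^3*c^7*d^3 + 2*a*b^3*c^9*d - 2*a*b^5*c*d + 4*a*b^5*c^3*d^3 - 4*a*b^5*c^3*d^5 + 2*a*b^5*c^5*d - 5*a*b^5*c^5*d^3 - a*b^5*c^5*d^5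 + a*b^5*c^7*d^3 + 4*a*b^7*c^3*d^3 + 2*a*b^7*c^5*d - a*b^7*c^5*d^5 + a*b^7*c^7*d^3 + 2*a^2*d^2 - a^2*d^4 - a^2*d^6 - 2*a^2*c^2 - 2*a^2*c^2*d^2 + a^2*c^2*d^4 + 22*a^2*c^4*d^2 - 13*a^2*c^4*d^4 - 5*a^2*c^4*d^6 - 18*a^2*c^6*d^2 - 5*a^2*c^6*d^4 + 2*a^2*c^8*d^2 + 2*a^2*c^10 + 2*a^2*b^2*d^2 - a^2*b^2*d^6 - 2*a^2*b^2*c^2 + a^2*b^2*c^2*d^4 + 24*a^2*b^2*c^4*d^2 - 15*a^2*b^2*c^4*d^4 - 5*a^2*b^2*c^4*d^6 - 18*a^2*b^2*c^6*d^2 - 5*a^2*b^2*c^6*d^4 + 2*a^2*b^2*c^8*d^2 + 2*a^2*b^2*c^10 + 2*a^2*b^4*d^2 - 2*a^2*b^4*c^2 - 17*a^2*b^4*c^4*d^4 - 5*a^2*b^4*c^4*d^6 - 18*a^2*b^4*c^6*d^2 - 5*a^2*b^4*c^6*d^4 - 2*a^2*b^4*c^8*d^2 + 2*a^2*b^6*c^4*d^2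 - 5*a^2*b^6*c^4*d^6 - 5*a^2*b^6*c^6*d^4 - 2*a^2*b^6*c^8*d^2 + 6*a^3*b*c*d - 12*a^3*b*c*d^5 + 4*a^3*b*c*d^7 - 3*a^3*b*c^3*d^3 + 2*a^3*b*c^3*d^5 - 10*a^3*b*c^3*d^7 - 3*a^3*b*c^5*d - 8*a^3*b*c^5*d^3 - 20*a^3*b*c^5*d^5 - 5*a^3*b*c^7*d - 7*a^3*b*c^7*d^3 + 3*a^3*b*c^9*d + 4*a^3*b^3*c*d - 4*a^3*b^3*c*d^5 + 4*a^3*b^3*c*d^7 - 8*a^3*b^3*c^3*d^3 - 2*a^3*b^3*c^3*d^5 - 10*a^3*b^3*c^3*d^7 - 4*a^3*b^3*c^5*d - 13*a^3*b^3*c^5*d^3 - 21*a^3*b^3*c^5*d^5 - 5*a^3*b^3*c^7*d - 6*a^3*b^3*c^7*d^3 + a^3*b^3*c^9*d - 4*a^3*b^5*c*d^5 - 4*a^3*b^5*c^3*d^3 - 10*a^3*b^5*c^3*d^7 - 2*a^3*b^5*c^5*d - 22*a^3*b^5*c^5*d^5 - 5*a^3*b^5*c^7*d^3 + a^3*b^5*c^9*d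 - 4*a^4*d^2 + 2*a^4*d^6 + 2*a^4*d^8 + 4*a^4*c^2 - 5*a^4*c^2*d^4 + 22*a^4*c^2*d^6 - 10*a^4*c^2*d^8 - 25*a^4*c^4*d^2 + 44*a^4*c^4*d^4 - 22*a^4*c^4*d^6 + 17*a^4*c^6*d^2 - 13*a^4*c^6*d^4 - 2*a^4*c^8 - 3*a^4*c^8*d^2 - 2*a^4*c^10 - 2*a^4*b^2*d^2 - 2*a^4*b^2*d^6 + 2*a^4*b^2*d^8 + 2*a^4*b^2*c^2 - 4*a^4*b^2*c^2*d^4 + 22*a^4*b^2*c^2*d^6 - 10*a^4*b^2*c^2*d^8 - 2*a^4*b^2*c^4*d^2 + 29*a^4*b^2*c^4*d^4 - 27*a^4*b^2*c^4*d^6 - a^4*b^2*c^6*d^2 - 14*a^4*b^2*c^6*d^4 - 2*a^4*b^2*c^8 - a^4*b^2*c^8*d^2 - 2*a^4*b^4*d^6 - 4*a^4*b^4*c^2*d^4 - 10*a^4*b^4*c^2*d^8 - 2*a^4*b^4*c^4*d^2 - 32*a^4*b^4*c^4*d^6 - 19*a^4*b^4*c^6*d^4 - 3*a^4*b^4*c^8*d^2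 - 4*a^5*b*c*d + 6*a^5*b*c*d^5 + 7*a^5*b*c*d^7 - 5*a^5*b*c*d^9 + 12*a^5*b*c^3*d^3 + 14*a^5*b*c^3*d^5 - 17*a^5*b*c^3*d^7 + 6*a^5*b*c^5*d + 7*a^5*b*c^5*d^3 - 23*a^5*b*c^5*d^5 + a^5*b*c^7*d - 12*a^5*b*c^7*d^3 - 3*a^5*b*c^9*d + 2*a^5*b^3*c*d^5 - 5*a^5*b^3*c*d^9 + 4*a^5*b^3*c^3*d^3 - 27*a^5*b^3*c^3*d^7 + 2*a^5*b^3*c^5*d - 44*a^5*b^3*c^5*d^5 - 18*a^5*b^3*c^7*d^3 - 2*a^5*b^3*c^9*d + 2*a^6*d^2 + 4*a^6*d^6 - 5*a^6*d^8 - a^6*d^10 - 2*a^6*c^2 + 8*a^6*c^2*d^4 - 16*a^6*c^2*d^6 - 3*a^6*c^2*d^8 + 4*a^6*c^4*d^2 - 7*a^6*c^4*d^4 - 7*a^6*c^4*d^6 + a^6*c^6*d^2 - 4*a^6*c^6*d^4 + 2*a^6*c^8 - a^6*c^8*d^2 + 2*a^6*b^2*d^6 - a^6*b^2*d^10 + 4*a^6*b^2*c^2*d^4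 - 13*a^6*b^2*c^2*d^8 + 2*a^6*b^2*c^4*d^2 - 34*a^6*b^2*c^4*d^6 - 18*a^6*b^2*c^6*d^4 - 2*a^6*b^2*c^8*d^2 - 2*a^7*b*c*d^5 - 4*a^7*b*c^3*d^3 + 3*a^7*b*c^3*d^7 - 2*a^7*b*c^5*d + 7*a^7*b*c^5*d^5 + 8*a^7*b*c^7*d^3 + 2*a^7*b*c^9*d - 2*a^8*d^6 + 2*a^8*d^10 - 4*a^8*c^2*d^4 + 9*a^8*c^2*d^8 - 2*a^8*c^4*d^2 + 11*a^8*c^4*d^6 + 8*a^8*c^6*d^4 + 2*a^8*c^8*d^2) * hab + (-2*c^4*d^2 + 2*a*b*c*d + a*b*c*d^3 + 2*a*b*c^3*d - 4*a*b*c^3*d^3 - a*b*c^5*d^3 + 2*a*b*c^7*d - 2*a^2*d^2 - a^2*d^4 + 2*a^2*c^2 + 2*a^2*c^2*d^2 + 2*a^2*c^4 - 16*a^2*c^4*d^2 - 5*a^2*c^4*d^4 + 2*a^2*c^6 + 2*a^2*c^8 - 8*a^3*b*c*d - 9*a^3*b*c*d^3 + 4*a^3*b*c*d^5 - 9*a^3*b*c^3*d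 - 8*a^3*b*c^3*d^3 - 10*a^3*b*c^3*d^5 - 4*a^3*b*c^5*d - 9*a^3*b*c^5*d^3 + a^3*b*c^7*d + 6*a^4*d^2 + 5*a^4*d^4 + 2*a^4*d^6 - 6*a^4*c^2 - a^4*c^2*d^2 + 10*a^4*c^2*d^4 - 10*a^4*c^2*d^6 - 6*a^4*c^4 + 40*a^4*c^4*d^2 - 7*a^4*c^4*d^4 - 6*a^4*c^6 - a^4*c^6*d^2 - 4*a^4*c^8 + 10*a^5*b*c*d + 10*a^5*b*c*d^3 - 2*a^5*b*c*d^5 - 5*a^5*b*c*d^7 + 10*a^5*b*c^3*d + 12*a^5*b*c^3*d^3 - 2*a^5*b*c^3*d^5 - 3*a^5*b*c^5*d^3 - 6*a^5*b*c^7*d - 6*a^6*d^2 - 6*a^6*d^4 - 8*a^6*d^6 - a^6*d^8 + 6*a^6*c^2 - 22*a^6*c^2*d^4 + 8*a^6*c^2*d^6 + 6*a^6*c^4 - 22*a^6*c^4*d^2 + 7*a^6*c^4*d^4 + 6*a^6*c^6 + 2*a^6*c^8 - 4*a^7*b*c*d - 4*a^7*b*c*d^3 + 4*a^7*b*c*d^5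 + 5*a^7*b*c*d^7 - 4*a^7*b*c^3*d + 8*a^7*b*c^3*d^3 + 15*a^7*b*c^3*d^5 + 4*a^7*b*c^5*d + 15*a^7*b*c^5*d^3 + 5*a^7*b*c^7*d + 2*a^8*d^2 + 2*a^8*d^4 + 8*a^8*d^6 + 3*a^8*d^8 - 2*a^8*c^2 + 14*a^8*c^2*d^4 + 9*a^8*c^2*d^6 - 2*a^8*c^4 + 4*a^8*c^4*d^2 + 9*a^8*c^4*d^4 - 2*a^8*c^6 + 3*a^8*c^6*d^2 - 2*a^9*b*c*d^5 - 2*a^9*b*c*d^7 - 4*a^9*b*c^3*d^3 - 6*a^9*b*c^3*d^5 - 2*a^9*b*c^5*d - 6*a^9*b*c^5*d^3 - 2*a^9*b*c^7*d - 2*a^10*d^6 - 2*a^10*d^8 - 4*a^10*c^2*d^4 - 6*a^10*c^2*d^6 - 2*a^10*c^4*d^2 - 6*a^10*c^4*d^4 - 2*a^10*c^6*d^2) * hcd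
  have hsum : -2*b^3*c^3*(b*c-a*d)^3*(b*c+a*d)^6*(a*c+b*d)^7
      + -(a*d)*b^3*c^3*(b*c+a*d)^8*(b*c-a*d)^2*(a*c+b*d)^7
      + (a*d)*b^3*c^3*(b*c-a*d)^3*(b*c+a*d)^3*(a*c+b*d)^7
      + -2*a*b^8*c^3*(b*c-a*d)^3*(b*c+a*d)^3*(a*c+b*d)^4
      + -2*d*b^3*c^8*(b*c-a*d)^3*(b*c+a*d)^3*(a*c+b*d)^4
      + 2*d*b^8*c^3*(b*c-a*d)^3*(b*c+a*d)^6*(a*c+b*d)^4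
      + 2*a*b^3*c^8*(b*c-a*d)^3*(b*c+a*d)^6*(a*c+b*d)^4
      + (a*d)*b^3*c^3*(a*c-b*d)^2*(1+(b*c+a*d)*(b*c-a*d))^3*(b*c-a*d)^3*(b*c+a*d)^3*(a*c+b*d)^3
      = -32*a^2*b^7*c^7*d^2*(b*c-a*d)^2*(b*c+a*d)^3*(a*c+b*d)^3 := by
    linear_combination (b^3*c^3*(b*c+a*d)^3*(b*c-a*d)^2*(a*c+b*d)^3) * hred
  have hRden : (8:ℝ)*(b*c-a*d)*(a*c+b*d)^4*(b*c+a*d)^3 ≠ 0 := by positivity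
  simp only [chi3']
  rw [hb2, hc2, hST, hCC, h2ad, hd6, hd7, hd4, hd5, hM, hd8]
  rw [e1, e2, e3, e4, e5, e6, e7, e8]
  simp only [← add_div]
  rw [hsum, div_eq_div_iff hDne hRden]
  ring

set_option maxHeartbeats 1000000 in
/-- in the angle parametrization `x = cos²((φ+λ)/2)`,
`y = sin²((φ−λ)/2)` of the arctic ellipse, (i) `h = √(xy/((1−x)(1−y)))
= (sin φ − sin λ)/(sin φ + sin λ)`, and (ii)
`∂³_η χ(x,y;η)|_{η=h} = −(sin φ − sin λ)(sin φ + sin λ)⁷/(8 sin λ cos⁴λ sin³φ)`. -/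
theorem chi_third_deriv_on_arctic_ellipse (lam phi : ℝ)
    (hlam : 0 < lam) (hlp : lam < phi) (hphi : phi < Real.pi / 2) :
    let x := Real.cos ((phi + lam) / 2) ^ 2
    let y := Real.sin ((phi - lam) / 2) ^ 2
    let h := Real.sqrt (x * y / ((1 - x) * (1 - y)))
    h = (Real.sin phi - Real.sin lam) / (Real.sin phi + Real.sin lam) ∧
    deriv (deriv (deriv (fun η => chi x y η))) h
      = -((Real.sin phi - Real.sin lam) * (Real.sin phi + Real.sin lam) ^ 7) /
          (8 * Real.sin lam * Real.cos lam ^ 4 * Real.sin phi ^ 3) := by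
  intro x y h
  have hpi := Real.pi_pos
  have hxe : x = Real.cos ((phi + lam) / 2) ^ 2 := rfl
  have hye : y = Real.sin ((phi - lam) / 2) ^ 2 := rfl
  have hhe : h = Real.sqrt (x * y / ((1 - x) * (1 - y))) := rfl
  rw [hxe, hye] at hhe
  simp only [hxe, hye]
  set A := Real.cos ((phi + lam) / 2) with hA
  set B := Real.sin ((phi + lam) / 2) with hB
  set C := Real.cos ((phi - lam) / 2) with hC
  set D := Real.sin ((phi - lam) / 2) with hD
  have hA0 : 0 < A := Real.cos_pos_of_mem_Ioo ⟨by linarith, by linarith⟩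
  have hB0 : 0 < B := Real.sin_pos_of_pos_of_lt_pi (by linarith) (by linarith)
  have hC0 : 0 < C := Real.cos_pos_of_mem_Ioo ⟨by linarith, by linarith⟩
  have hD0 : 0 < D := Real.sin_pos_of_pos_of_lt_pi (by linarith) (by linarith)
  have hab : A^2 + B^2 = 1 := by rw [hA, hB]; exact Real.cos_sq_add_sin_sq _
  have hcd : C^2 + D^2 = 1 := by rw [hC, hD]; exact Real.cos_sq_add_sin_sq _
  have h1A : (1:ℝ) - A^2 = B^2 := by linarith
  have h1D : (1:ℝ) - D^2 = C^2 := by linarith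
  have hsphi : Real.sin phi = B*C + A*D := by
    rw [hA, hB, hC, hD, ← Real.sin_add]; congr 1; ring
  have hslam : Real.sin lam = B*C - A*D := by
    rw [hA, hB, hC, hD, ← Real.sin_sub]; congr 1; ring
  have hclam : Real.cos lam = A*C + B*D := by
    rw [hA, hB, hC, hD, ← Real.cos_sub]; congr 1; ring
  have hslam0 : 0 < Real.sin lam := Real.sin_pos_of_pos_of_lt_pi hlam (by linarith)
  have hT : A*D < B*C := by rw [hslam] at hslam0; linarith
  have hBC : (0:ℝ) < B*C := by positivity
  have hhval : h = A*D/(B*C) := by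
    rw [hhe, show A^2*D^2/((1-A^2)*(1-D^2)) = (A*D/(B*C))^2 by rw [h1A, h1D]; ring]
    exact Real.sqrt_sq (by positivity)
  constructor
  · rw [hhval, hsphi, hslam]
    rw [div_eq_div_iff hBC.ne' (by linarith : (0:ℝ) < B*C+A*D + (B*C-A*D)).ne']
    ring
  · have hx1 : A^2 < 1 := by nlinarith
    have hy1 : D^2 < 1 := by nlinarith
    have hhIoo : h ∈ Set.Ioo (0:ℝ) 1 := by
      rw [hhval]
      exact ⟨by positivity, (div_lt_one hBC).mpr hT⟩
    rw [third_deriv _ _ _ (by positivity) hx1 (by positivity) hy1 hhIoo]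
    rw [hhval]
    rw [chi3'_key A B C D hA0 hB0 hC0 hD0 hab hcd hT]
    rw [hsphi, hslam, hclam]
    ring
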